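/- Let μ be the Gibbs distribution of a spin system on a finite graph G = (V,E) that is M-coupling independent (with witnessing weight function ρ), let V = U_1 ⊎ ⋯ ⊎ U_k be a partition, and let 0 ≤ r ≤ k−2M, R ⊆ [k] with |R| = r, and τ ∈ [q]^{U_R} be any pinning. Then the relaxation time of the (k−r)↔1 down-up walk on μ^τ is at most 2; that is, for every f: [q]^V → ℝ, Var_{μ^τ}[f] ≤ (2/(k−r)) · Σ_{j ∈ [k]∖R} μ^τ[Var_{V∖U_{R∪{j}}}[f]]. Moreover, for any two configurations X, Y ∈ [q]^{V∖U_R} that differ at exactly one vertex v₀, there is a coupling (X′, Y′) of one step of this down-up walk started from X and from Y (i.e., pick the same j ∈ [k]∖R uniformly at random and resample the coordinates outside U_{R∪{j}} from μ conditioned on τ and the current values on U_j) such that E[H_ρ(X′,Y′)] ≤ (M/(k−r))·ρ(v₀) ≤ (1/2)·ρ(v₀). -/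

import Mathlib

open Finset
open scoped BigOperators Classical

namespace Paper

/-- Configurations: assignments of one of `q` spins to each of `n` vertices. -/
abbrev Config (n q : ℕ) := Fin n → Fin q

/-- A spin system on a graph `G` on vertex set `Fin n` with spin set `Fin q`:
nonnegative external fields and nonnegative symmetric interaction matrices. -/
structure SpinSystem (n q : ℕ) (G : SimpleGraph (Fin n)) where
  b : Fin n → Fin q → ℝ
  A : Fin n → Fin n → Fin q → Fin q → ℝ
  b_nonneg : ∀ v a, 0 ≤ b v a
  A_nonneg : ∀ v w a c, 0 ≤ A v w a c
  A_symm : ∀ v w a c, A v w a c = A w v c a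

variable {n q k : ℕ}

/-- The number of neighbours of `v` (in `G`) lying inside `Λ`. -/
noncomputable def degIn (G : SimpleGraph (Fin n)) (Λ : Finset (Fin n)) (v : Fin n) : ℕ :=
  (Λ.filter fun w => G.Adj v w).card

/-- The maximum degree of `G`. -/
noncomputable def maxDeg (G : SimpleGraph (Fin n)) : ℕ :=
  univ.sup fun v => degIn G univ v

/-- The edges of `G`, listed as ordered pairs `p` with `p.1 < p.2`. -/
noncomputable def edgePairs (G : SimpleGraph (Fin n)) : Finset (Fin n × Fin n) :=
  univ.filter fun p => p.1 < p.2 ∧ G.Adj p.1 p.2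

/-- Conditional Gibbs weight: the free set is `Λ`, and the pinning uses the values
of `τ` outside of `Λ`.  Edges lying entirely outside `Λ` are dropped. -/
noncomputable def condWeight {G : SimpleGraph (Fin n)} (S : SpinSystem n q G)
    (Λ : Finset (Fin n)) (τ σ : Config n q) : ℝ :=
  (if ∀ v, v ∉ Λ → σ v = τ v then (1 : ℝ) else 0)
    * (∏ v ∈ Λ, S.b v (σ v))
    * ∏ p ∈ (edgePairs G).filter (fun p => p.1 ∈ Λ ∨ p.2 ∈ Λ),
        S.A p.1 p.2 (σ p.1) (σ p.2)

/-- The conditional Gibbs distribution `μ^τ` with free set `Λ` and pinning `τ`. -/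
noncomputable def condDist {G : SimpleGraph (Fin n)} (S : SpinSystem n q G)
    (Λ : Finset (Fin n)) (τ : Config n q) : Config n q → ℝ :=
  fun σ => condWeight S Λ τ σ / ∑ σ' : Config n q, condWeight S Λ τ σ'

/-- The Gibbs distribution of the spin system. -/
noncomputable def gibbsDist {G : SimpleGraph (Fin n)} (S : SpinSystem n q G) :
    Config n q → ℝ :=
  fun σ => condWeight S univ σ σ / ∑ σ' : Config n q, condWeight S univ σ' σ'

/-- Every conditional weight has positive total mass. -/
def PosCondMass {G : SimpleGraph (Fin n)} (S : SpinSystem n q G) : Prop :=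
  ∀ (Λ : Finset (Fin n)) (τ : Config n q), 0 < ∑ σ : Config n q, condWeight S Λ τ σ

/-- Expectation of `f` under (the finitely supported density) `μ`. -/
noncomputable def expVal (μ f : Config n q → ℝ) : ℝ := ∑ σ, μ σ * f σ

/-- Variance of `f` under `μ`. -/
noncomputable def varD (μ f : Config n q → ℝ) : ℝ :=
  expVal μ fun σ => (f σ - expVal μ f) ^ 2

/-- `μ` conditioned to agree with `σ₀` on the set `T`. -/
noncomputable def restrictDist (μ : Config n q → ℝ) (T : Finset (Fin n)) (σ₀ : Config n q) :
    Config n q → ℝ :=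
  fun σ => (if ∀ v ∈ T, σ v = σ₀ v then μ σ else 0)
    / ∑ σ' ∈ univ.filter (fun σ' : Config n q => ∀ v ∈ T, σ' v = σ₀ v), μ σ'

/-- `μ[Var_S[f]]`: the average over `σ ~ μ` of the variance of `f` under `μ`
conditioned on the coordinates outside the free set `Sfree`. -/
noncomputable def avgCondVar (μ : Config n q → ℝ) (Sfree : Finset (Fin n))
    (f : Config n q → ℝ) : ℝ :=
  ∑ σ, μ σ * varD (restrictDist μ Sfreeᶜ σ) f

/-- `C` is an upper bound on the relaxation time of the Glauber dynamics on `μ`: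
approximate tensorization of variance with constant `C`. -/
def IsRelaxBound (μ : Config n q → ℝ) (C : ℝ) : Prop :=
  0 ≤ C ∧ ∀ f : Config n q → ℝ,
    varD μ f ≤ C / (n : ℝ) * ∑ v : Fin n, avgCondVar μ {v} f

/-- `π` is a coupling of `μ` and `ν`. -/
structure IsCoupling (μ ν : Config n q → ℝ) (π : Config n q → Config n q → ℝ) : Prop where
  nonneg : ∀ x y, 0 ≤ π x y
  fst_marginal : ∀ x, ∑ y, π x y = μ x
  snd_marginal : ∀ y, ∑ x, π x y = ν y

/-- Weighted Hamming distance with weight function `ρ`. -/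
noncomputable def hamW (ρ : Fin n → ℕ) (x y : Config n q) : ℝ :=
  ∑ v ∈ univ.filter (fun v => x v ≠ y v), (ρ v : ℝ)

/-- Expected weighted Hamming distance under a coupling `π`. -/
noncomputable def expHam (π : Config n q → Config n q → ℝ) (ρ : Fin n → ℕ) : ℝ :=
  ∑ x, ∑ y, π x y * hamW ρ x y

/-- Coupling independence (with a fixed witnessing weight `ρ`) of the Gibbs
distribution of the spin system `S`, using Gibbs conditional distributions. -/
def CoupIndepWith {G : SimpleGraph (Fin n)} (S : SpinSystem n q G) (ρ : Fin n → ℕ)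
    (C : ℝ) : Prop :=
  (∀ v, 0 < ρ v) ∧
  ∀ (P : Finset (Fin n)) (v₀ : Fin n) (σ₁ σ₂ : Config n q),
    v₀ ∈ P → σ₁ v₀ ≠ σ₂ v₀ → (∀ v ∈ P, v ≠ v₀ → σ₁ v = σ₂ v) →
    ∃ π, IsCoupling (condDist S Pᶜ σ₁) (condDist S Pᶜ σ₂) π ∧
      expHam π ρ ≤ C * (ρ v₀ : ℝ)

/-- The spin system `S` is `C`-coupling independent. -/
def CoupIndep {G : SimpleGraph (Fin n)} (S : SpinSystem n q G) (C : ℝ) : Prop :=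
  ∃ ρ : Fin n → ℕ, CoupIndepWith S ρ C

/-- `C`-coupling independence for a bare distribution `μ`, using conditionals
obtained by restriction. -/
def CoupIndepDist (μ : Config n q → ℝ) (C : ℝ) : Prop :=
  ∃ ρ : Fin n → ℕ, (∀ v, 0 < ρ v) ∧
  ∀ (P : Finset (Fin n)) (v₀ : Fin n) (σ₁ σ₂ : Config n q),
    v₀ ∈ P → σ₁ v₀ ≠ σ₂ v₀ → (∀ v ∈ P, v ≠ v₀ → σ₁ v = σ₂ v) →
    ∃ π, IsCoupling (restrictDist μ P σ₁) (restrictDist μ P σ₂) π ∧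
      expHam π ρ ≤ C * (ρ v₀ : ℝ)

/-- `Λ ∈ D(η)`: the induced subgraph `G[Λ]` has maximum degree at most `η·Δ`. -/
def InDeta (G : SimpleGraph (Fin n)) (η : ℝ) (Λ : Finset (Fin n)) : Prop :=
  ∀ v ∈ Λ, (degIn G Λ v : ℝ) ≤ η * (maxDeg G : ℝ)

/-- `U` is a partition of the vertex set into `k` (possibly empty) parts. -/
def IsPartition (U : Fin k → Finset (Fin n)) : Prop :=
  (∀ i j, i ≠ j → Disjoint (U i) (U j)) ∧ ∀ v : Fin n, ∃ i, v ∈ U i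

/-- A `(ξ,k)`-degree partition of `G`. -/
def IsDegreePartition (G : SimpleGraph (Fin n)) (ξ : ℝ) (U : Fin k → Finset (Fin n)) :
    Prop :=
  IsPartition U ∧ ∀ (v : Fin n) (i : Fin k),
    (degIn G (U i) v : ℝ) ≤ (1 + ξ) * (maxDeg G : ℝ) / (k : ℝ)

/-- `U_R = ⋃_{i ∈ R} U_i`. -/
noncomputable def unionBlocks (U : Fin k → Finset (Fin n)) (R : Finset (Fin k)) :
    Finset (Fin n) :=
  R.biUnion U

/-- The Glauber update `P_v` at vertex `v` for the distribution `μ`. -/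
noncomputable def glauberUpdate (μ : Config n q → ℝ) (v : Fin n) (x y : Config n q) : ℝ :=
  if ∀ u, u ≠ v → y u = x u then
    (if 0 < ∑ σ ∈ univ.filter (fun σ : Config n q => ∀ u, u ≠ v → σ u = x u), μ σ then
      μ y / ∑ σ ∈ univ.filter (fun σ : Config n q => ∀ u, u ≠ v → σ u = x u), μ σ
    else if y = x then 1 else 0)
  else 0

/-- The transition matrix of the Glauber dynamics on `μ`. -/
noncomputable def glauberP (μ : Config n q → ℝ) : Config n q → Config n q → ℝ :=
  fun x y => (1 / (n : ℝ)) * ∑ v : Fin n, glauberUpdate μ v x y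

/-- One step of a Markov kernel applied to a distribution. -/
noncomputable def stepD (P : Config n q → Config n q → ℝ) (ν : Config n q → ℝ) :
    Config n q → ℝ :=
  fun y => ∑ x, ν x * P x y

/-- The Dirac distribution at `x₀`. -/
noncomputable def delta (x₀ : Config n q) : Config n q → ℝ :=
  fun y => if y = x₀ then 1 else 0

/-- Total variation distance. -/
noncomputable def dTV (μ ν : Config n q → ℝ) : ℝ := (1 / 2) * ∑ σ, |μ σ - ν σ|

/-- TV distance to `μ` after `t` steps of the Glauber dynamics on `μ` started at `x₀`. -/
noncomputable def glauberDist (μ : Config n q → ℝ) (x₀ : Config n q) (t : ℕ) : ℝ :=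
  dTV ((stepD (glauberP μ))^[t] (delta x₀)) μ

/-- Coordinatewise partial order on configurations induced by the per-vertex
total orders `le`. -/
def ConfLE (le : Fin n → Fin q → Fin q → Prop) (x y : Config n q) : Prop :=
  ∀ v, le v (x v) (y v)

/-- Stochastic domination with respect to the order `le`. -/
def StochDom (le : Fin n → Fin q → Fin q → Prop) (μ ν : Config n q → ℝ) : Prop :=
  ∃ π, IsCoupling μ ν π ∧ ∀ x y, π x y ≠ 0 → ConfLE le x y

/-- `μ` is a monotone spin system w.r.t. the per-vertex orders `le`. -/
def MonotoneSystem (le : Fin n → Fin q → Fin q → Prop) (μ : Config n q → ℝ) : Prop :=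
  ∀ (v : Fin n) (x y : Config n q), ConfLE le x y →
    StochDom le (glauberUpdate μ v x) (glauberUpdate μ v y)

/-- Hardcore weight: spin `1` means occupied. -/
noncomputable def hcWeight (G : SimpleGraph (Fin n)) (lam : ℝ) (σ : Config n 2) : ℝ :=
  if ∀ u v, G.Adj u v → ¬(σ u = 1 ∧ σ v = 1) then
    lam ^ (univ.filter fun v => σ v = 1).card
  else 0

/-- The hardcore distribution on `G` with fugacity `lam`. -/
noncomputable def hardcoreDist (G : SimpleGraph (Fin n)) (lam : ℝ) : Config n 2 → ℝ :=
  fun σ => hcWeight G lam σ / ∑ σ' : Config n 2, hcWeight G lam σ'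

/-- The tree uniqueness threshold `λ_c(Δ)`. -/
noncomputable def lambdaC (Δ : ℕ) : ℝ := ((Δ : ℝ) - 1) ^ (Δ - 1) / ((Δ : ℝ) - 2) ^ Δ

/-- `G` is bipartite with parts `VL` and `VLᶜ`. -/
def Bipartite (G : SimpleGraph (Fin n)) (VL : Finset (Fin n)) : Prop :=
  ∀ u v, G.Adj u v → (u ∈ VL ↔ v ∉ VL)

/-- Maximum degree of `G` among the vertices of `W`. -/
noncomputable def maxDegOn (G : SimpleGraph (Fin n)) (W : Finset (Fin n)) : ℕ :=
  W.sup fun v => degIn G univ v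

/-- The marginal of `μ` on `W`, realized as a distribution on full configurations
that vanish (take spin `0`) outside of `W`. -/
noncomputable def marginalOn (μ : Config n 2 → ℝ) (W : Finset (Fin n)) :
    Config n 2 → ℝ :=
  fun σ => if ∀ v, v ∉ W → σ v = 0 then
      ∑ σ' ∈ univ.filter (fun σ' : Config n 2 => ∀ v ∈ W, σ' v = σ v), μ σ'
    else 0

/-- Proper list colorings of `G` with lists `L`. -/
noncomputable def properColorings (G : SimpleGraph (Fin n)) (L : Fin n → Finset (Fin q)) :
    Finset (Config n q) :=
  univ.filter fun σ => (∀ v, σ v ∈ L v) ∧ ∀ u v, G.Adj u v → σ u ≠ σ v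

/-- Uniform distribution over a finite set of configurations. -/
noncomputable def uniformOn (Ω : Finset (Config n q)) : Config n q → ℝ :=
  fun σ => if σ ∈ Ω then (1 : ℝ) / (Ω.card : ℝ) else 0

/-- The subgraph of `G` induced on `W` (kept on the same vertex type). -/
def restrictG (G : SimpleGraph (Fin n)) (W : Finset (Fin n)) : SimpleGraph (Fin n) where
  Adj u v := G.Adj u v ∧ u ∈ W ∧ v ∈ W
  symm := ⟨fun u v h => ⟨G.symm.symm u v h.1, h.2.2, h.2.1⟩⟩
  loopless := ⟨fun v h => G.loopless.irrefl v h.1⟩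

/-- The vertex set of the connected component of `v` in `G[W]` (empty if `v ∉ W`). -/
noncomputable def compIn (G : SimpleGraph (Fin n)) (W : Finset (Fin n)) (v : Fin n) :
    Finset (Fin n) :=
  if v ∈ W then univ.filter (fun w => w ∈ W ∧ (restrictG G W).Reachable v w) else ∅



section AuxStatement5

variable {n q : ℕ}

lemma condWeight_nonneg' {G : SimpleGraph (Fin n)} (S : SpinSystem n q G)
    (Λ : Finset (Fin n)) (τ σ : Config n q) : 0 ≤ condWeight S Λ τ σ := by
  unfold condWeight
  refine mul_nonneg (mul_nonneg ?_ ?_) ?_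
  · split <;> norm_num
  · exact Finset.prod_nonneg fun v _ => S.b_nonneg _ _
  · exact Finset.prod_nonneg fun p _ => S.A_nonneg _ _ _ _

lemma condWeight_eq_zero' {G : SimpleGraph (Fin n)} (S : SpinSystem n q G)
    {Λ : Finset (Fin n)} {τ σ : Config n q} (h : ¬ ∀ v, v ∉ Λ → σ v = τ v) :
    condWeight S Λ τ σ = 0 := by
  unfold condWeight; rw [if_neg h, zero_mul, zero_mul]

lemma condWeight_congr' {G : SimpleGraph (Fin n)} (S : SpinSystem n q G)
    {Λ : Finset (Fin n)} {τ₁ τ₂ : Config n q} (h : ∀ v, v ∉ Λ → τ₁ v = τ₂ v)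
    (σ : Config n q) : condWeight S Λ τ₁ σ = condWeight S Λ τ₂ σ := by
  unfold condWeight
  congr 2
  refine if_congr ?_ rfl rfl
  constructor
  · intro hh v hv; rw [hh v hv, h v hv]
  · intro hh v hv; rw [hh v hv, ← h v hv]

lemma condDist_nonneg' {G : SimpleGraph (Fin n)} (S : SpinSystem n q G)
    (Λ : Finset (Fin n)) (τ σ : Config n q) : 0 ≤ condDist S Λ τ σ :=
  div_nonneg (condWeight_nonneg' S Λ τ σ)
    (Finset.sum_nonneg fun σ' _ => condWeight_nonneg' S Λ τ σ')

lemma condDist_sum_one' {G : SimpleGraph (Fin n)} (S : SpinSystem n q G)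
    (hpos : PosCondMass S) (Λ : Finset (Fin n)) (τ : Config n q) :
    ∑ σ, condDist S Λ τ σ = 1 := by
  unfold condDist
  rw [← Finset.sum_div, div_self (ne_of_gt (hpos Λ τ))]

lemma condDist_congr' {G : SimpleGraph (Fin n)} (S : SpinSystem n q G)
    {Λ : Finset (Fin n)} {τ₁ τ₂ : Config n q} (h : ∀ v, v ∉ Λ → τ₁ v = τ₂ v) :
    condDist S Λ τ₁ = condDist S Λ τ₂ := by
  funext σ
  unfold condDist
  rw [condWeight_congr' S h σ]
  congr 1
  exact Finset.sum_congr rfl fun σ' _ => condWeight_congr' S h σ'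

lemma condDist_support' {G : SimpleGraph (Fin n)} (S : SpinSystem n q G)
    {Λ : Finset (Fin n)} {τ σ : Config n q} (h : condDist S Λ τ σ ≠ 0) :
    ∀ v, v ∉ Λ → σ v = τ v := by
  by_contra hc
  exact h (by unfold condDist; rw [condWeight_eq_zero' S hc, zero_div])

lemma hamW_nonneg' (ρ : Fin n → ℕ) (x y : Config n q) : 0 ≤ hamW ρ x y :=
  Finset.sum_nonneg fun v _ => by positivity

lemma hamW_self' (ρ : Fin n → ℕ) (x : Config n q) : hamW ρ x x = 0 := by
  unfold hamW
  rw [Finset.filter_false_of_mem (fun v _ => by simp), Finset.sum_empty]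

lemma hamW_le_total' (ρ : Fin n → ℕ) (x y : Config n q) :
    hamW ρ x y ≤ ∑ v : Fin n, (ρ v : ℝ) :=
  Finset.sum_le_sum_of_subset_of_nonneg (Finset.filter_subset _ _)
    (fun v _ _ => by positivity)

lemma one_le_hamW' {ρ : Fin n → ℕ} (hρ : ∀ v, 0 < ρ v) {x y : Config n q}
    (h : x ≠ y) : 1 ≤ hamW ρ x y := by
  obtain ⟨v, hv⟩ : ∃ v, x v ≠ y v := by
    by_contra hc; push_neg at hc; exact h (funext hc)
  calc (1 : ℝ) ≤ (ρ v : ℝ) := by exact_mod_cast hρ v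
  _ ≤ hamW ρ x y := by
    unfold hamW
    exact Finset.single_le_sum (f := fun w => (ρ w : ℝ)) (fun w _ => by positivity)
      (Finset.mem_filter.2 ⟨Finset.mem_univ v, hv⟩)

lemma hamW_single' (ρ : Fin n → ℕ) {x y : Config n q} {v₀ : Fin n}
    (h : x v₀ ≠ y v₀) (h2 : ∀ v, v ≠ v₀ → x v = y v) : hamW ρ x y = (ρ v₀ : ℝ) := by
  unfold hamW
  have : Finset.filter (fun v => x v ≠ y v) Finset.univ = {v₀} := by
    ext v
    simp only [Finset.mem_filter, Finset.mem_univ, true_and, Finset.mem_singleton]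
    constructor
    · intro hv; by_contra hne; exact hv (h2 v hne)
    · intro hv; rw [hv]; exact h
  rw [this, Finset.sum_singleton]

end AuxStatement5


section AuxRestrict

variable {n q : ℕ}

/-- Conditional-expectation operator given the coordinates on `T`. -/
noncomputable def piOp (μ : Config n q → ℝ) (T : Finset (Fin n))
    (f : Config n q → ℝ) : Config n q → ℝ :=
  fun σ => expVal (restrictDist μ T σ) f

lemma restrict_filter_congr (μ : Config n q → ℝ) (T : Finset (Fin n))
    {x y : Config n q} (h : ∀ v ∈ T, y v = x v) :
    (Finset.univ.filter (fun σ' : Config n q => ∀ v ∈ T, σ' v = y v))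
      = Finset.univ.filter (fun σ' : Config n q => ∀ v ∈ T, σ' v = x v) := by
  apply Finset.filter_congr
  intro σ' _
  constructor
  · intro hh v hv; rw [hh v hv, h v hv]
  · intro hh v hv; rw [hh v hv, ← h v hv]

lemma restrictDist_congr (μ : Config n q → ℝ) (T : Finset (Fin n))
    {x y : Config n q} (h : ∀ v ∈ T, y v = x v) :
    restrictDist μ T y = restrictDist μ T x := by
  funext σ
  unfold restrictDist
  rw [restrict_filter_congr μ T h]
  congr 1
  refine if_congr ?_ rfl rfl
  constructor
  · intro hh v hv; rw [hh v hv, h v hv]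
  · intro hh v hv; rw [hh v hv, ← h v hv]

lemma restrictDist_nonneg (μ : Config n q → ℝ) (hμ0 : ∀ σ, 0 ≤ μ σ)
    (T : Finset (Fin n)) (σ y : Config n q) : 0 ≤ restrictDist μ T σ y := by
  unfold restrictDist
  refine div_nonneg ?_ (Finset.sum_nonneg fun σ' _ => hμ0 σ')
  split
  · exact hμ0 y
  · exact le_rfl

lemma restrict_mass_pos (μ : Config n q → ℝ) (hμ0 : ∀ σ, 0 ≤ μ σ)
    (T : Finset (Fin n)) {σ : Config n q} (hσ : μ σ ≠ 0) :
    0 < ∑ σ' ∈ Finset.univ.filter (fun σ' : Config n q => ∀ v ∈ T, σ' v = σ v), μ σ' := by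
  have hmem : σ ∈ Finset.univ.filter (fun σ' : Config n q => ∀ v ∈ T, σ' v = σ v) :=
    Finset.mem_filter.2 ⟨Finset.mem_univ σ, fun v _ => rfl⟩
  have h1 : μ σ ≤ ∑ σ' ∈ Finset.univ.filter
      (fun σ' : Config n q => ∀ v ∈ T, σ' v = σ v), μ σ' :=
    Finset.single_le_sum (fun y _ => hμ0 y) hmem
  exact lt_of_lt_of_le (lt_of_le_of_ne (hμ0 σ) (Ne.symm hσ)) h1

lemma restrictDist_sum (μ : Config n q → ℝ) (T : Finset (Fin n)) (σ : Config n q) :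
    ∑ y, restrictDist μ T σ y =
      if (∑ σ' ∈ Finset.univ.filter (fun σ' : Config n q => ∀ v ∈ T, σ' v = σ v), μ σ') = 0
      then 0 else 1 := by
  unfold restrictDist
  rw [← Finset.sum_div, Finset.sum_ite, Finset.sum_const_zero, add_zero]
  split
  · rename_i h; rw [h, div_zero]
  · rename_i h; exact div_self h

end AuxRestrict


section AuxPi

variable {n q : ℕ}

lemma restrict_symm (μ : Config n q → ℝ) (T : Finset (Fin n)) (σ y : Config n q) :
    μ σ * restrictDist μ T σ y = μ y * restrictDist μ T y σ := by
  unfold restrictDist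
  by_cases h : ∀ v ∈ T, y v = σ v
  · have h' : ∀ v ∈ T, σ v = y v := fun v hv => (h v hv).symm
    rw [if_pos h, if_pos h', restrict_filter_congr μ T h]
    ring
  · have h' : ¬ ∀ v ∈ T, σ v = y v := by
      intro hh; exact h fun v hv => (hh v hv).symm
    rw [if_neg h, if_neg h', zero_div, zero_div, mul_zero, mul_zero]

lemma restrict_tower (μ : Config n q → ℝ) (hμ0 : ∀ σ, 0 ≤ μ σ)
    (T : Finset (Fin n)) (y : Config n q) :
    ∑ σ, μ σ * restrictDist μ T σ y = μ y := by
  have : ∀ σ, μ σ * restrictDist μ T σ y = μ y * restrictDist μ T y σ :=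
    fun σ => restrict_symm μ T σ y
  rw [Finset.sum_congr rfl fun σ _ => this σ, ← Finset.mul_sum, restrictDist_sum]
  split
  · rename_i h
    have hy : μ y = 0 := by
      have h1 : μ y ≤ ∑ σ' ∈ Finset.univ.filter
          (fun σ' : Config n q => ∀ v ∈ T, σ' v = y v), μ σ' :=
        Finset.single_le_sum (fun z _ => hμ0 z)
          (Finset.mem_filter.2 ⟨Finset.mem_univ y, fun v _ => rfl⟩)
      exact le_antisymm (h ▸ h1) (hμ0 y)
    rw [hy, zero_mul]
  · rw [mul_one]

lemma piOp_congr (μ : Config n q → ℝ) (T : Finset (Fin n)) (f : Config n q → ℝ)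
    {x y : Config n q} (h : ∀ v ∈ T, y v = x v) : piOp μ T f y = piOp μ T f x := by
  unfold piOp; rw [restrictDist_congr μ T h]

lemma piOp_selfadj (μ : Config n q → ℝ) (T : Finset (Fin n)) (f g : Config n q → ℝ) :
    ∑ σ, μ σ * (f σ * piOp μ T g σ) = ∑ σ, μ σ * (piOp μ T f σ * g σ) := by
  unfold piOp expVal
  have L : ∀ σ, μ σ * (f σ * ∑ y, restrictDist μ T σ y * g y)
      = ∑ y, (μ σ * restrictDist μ T σ y) * (f σ * g y) := by
    intro σ; rw [Finset.mul_sum, Finset.mul_sum]; exact Finset.sum_congr rfl fun y _ => by ring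
  have R : ∀ σ, μ σ * ((∑ y, restrictDist μ T σ y * f y) * g σ)
      = ∑ y, (μ σ * restrictDist μ T σ y) * (f y * g σ) := by
    intro σ; rw [Finset.sum_mul, Finset.mul_sum]; exact Finset.sum_congr rfl fun y _ => by ring
  rw [Finset.sum_congr rfl fun σ _ => L σ, Finset.sum_congr rfl fun σ _ => R σ]
  rw [Finset.sum_comm]
  refine Finset.sum_congr rfl fun y _ => Finset.sum_congr rfl fun σ _ => ?_
  rw [restrict_symm μ T y σ]

lemma piOp_piOp (μ : Config n q → ℝ) (T : Finset (Fin n)) (f : Config n q → ℝ) :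
    piOp μ T (piOp μ T f) = piOp μ T f := by
  funext σ
  show expVal (restrictDist μ T σ) (piOp μ T f) = piOp μ T f σ
  unfold expVal
  have : ∀ y, restrictDist μ T σ y * piOp μ T f y
      = restrictDist μ T σ y * piOp μ T f σ := by
    intro y
    by_cases h : ∀ v ∈ T, y v = σ v
    · rw [piOp_congr μ T f h]
    · have : restrictDist μ T σ y = 0 := by
        unfold restrictDist; rw [if_neg h, zero_div]
      rw [this, zero_mul, zero_mul]
  rw [Finset.sum_congr rfl fun y _ => this y, ← Finset.sum_mul, restrictDist_sum]
  split
  · rename_i h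
    have h0 : piOp μ T f σ = 0 := by
      unfold piOp expVal restrictDist
      refine Finset.sum_eq_zero fun y _ => ?_
      rw [h, div_zero, zero_mul]
    rw [h0, mul_zero]
  · rw [one_mul]

lemma piOp_sq (μ : Config n q → ℝ) (T : Finset (Fin n)) (f : Config n q → ℝ) :
    ∑ σ, μ σ * (f σ * piOp μ T f σ) = ∑ σ, μ σ * (piOp μ T f σ * piOp μ T f σ) := by
  conv_lhs => rw [← piOp_piOp μ T f]
  rw [piOp_selfadj μ T f (piOp μ T f)]

lemma piOp_psd (μ : Config n q → ℝ) (hμ0 : ∀ σ, 0 ≤ μ σ) (T : Finset (Fin n))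
    (f : Config n q → ℝ) : 0 ≤ ∑ σ, μ σ * (f σ * piOp μ T f σ) := by
  rw [piOp_sq]
  exact Finset.sum_nonneg fun σ _ => mul_nonneg (hμ0 σ) (mul_self_nonneg _)

lemma varD_expand (ν f : Config n q → ℝ) :
    varD ν f = (∑ y, ν y * (f y * f y)) - 2 * (expVal ν f) * (expVal ν f)
      + (expVal ν f) * (expVal ν f) * (∑ y, ν y) := by
  unfold varD
  set m := expVal ν f with hm
  unfold expVal
  have : ∀ y, ν y * (f y - m) ^ 2
      = ν y * (f y * f y) - 2 * m * (ν y * f y) + m * m * ν y := by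
    intro y; ring
  rw [Finset.sum_congr rfl fun y _ => this y]
  rw [Finset.sum_add_distrib, Finset.sum_sub_distrib, ← Finset.mul_sum, ← Finset.mul_sum]
  rw [hm]; unfold expVal; ring

lemma varD_of_sum_one {ν f : Config n q → ℝ} (h : ∑ y, ν y = 1) :
    varD ν f = (∑ y, ν y * (f y * f y)) - (expVal ν f) * (expVal ν f) := by
  rw [varD_expand, h]; ring

lemma varD_shift {ν : Config n q → ℝ} (h : ∑ y, ν y = 1) (f : Config n q → ℝ) (c : ℝ) :
    varD ν (fun σ => f σ - c) = varD ν f := by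
  have hE : expVal ν (fun σ => f σ - c) = expVal ν f - c := by
    unfold expVal
    rw [Finset.sum_congr rfl (fun y _ => by ring :
      ∀ y ∈ Finset.univ, ν y * (f y - c) = ν y * f y - c * ν y)]
    rw [Finset.sum_sub_distrib, ← Finset.mul_sum, h, mul_one]
  unfold varD
  rw [hE]
  unfold expVal
  exact Finset.sum_congr rfl fun y _ => by ring_nf

lemma avgCondVar_eq (μ : Config n q → ℝ) (hμ0 : ∀ σ, 0 ≤ μ σ)
    (T : Finset (Fin n)) (f : Config n q → ℝ) :
    avgCondVar μ Tᶜ f = (∑ σ, μ σ * (f σ * f σ))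
      - ∑ σ, μ σ * (f σ * piOp μ T f σ) := by
  unfold avgCondVar
  rw [compl_compl]
  have key : ∀ σ, μ σ * varD (restrictDist μ T σ) f
      = μ σ * ((∑ y, restrictDist μ T σ y * (f y * f y))
          - piOp μ T f σ * piOp μ T f σ) := by
    intro σ
    by_cases hσ : μ σ = 0
    · rw [hσ, zero_mul, zero_mul]
    · have hZ := restrict_mass_pos μ hμ0 T hσ
      have hs : ∑ y, restrictDist μ T σ y = 1 := by
        rw [restrictDist_sum]; rw [if_neg (ne_of_gt hZ)]
      rw [varD_of_sum_one hs]; rfl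
  rw [Finset.sum_congr rfl fun σ _ => key σ]
  rw [Finset.sum_congr rfl (fun σ _ => mul_sub (μ σ) _ _), Finset.sum_sub_distrib]
  rw [piOp_sq]
  congr 1
  have : ∀ σ, μ σ * ∑ y, restrictDist μ T σ y * (f y * f y)
      = ∑ y, (μ σ * restrictDist μ T σ y) * (f y * f y) := by
    intro σ; rw [Finset.mul_sum]; exact Finset.sum_congr rfl fun y _ => by ring
  rw [Finset.sum_congr rfl fun σ _ => this σ, Finset.sum_comm]
  refine Finset.sum_congr rfl fun y _ => ?_
  rw [← Finset.sum_mul, restrict_tower μ hμ0 T y]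

lemma avgCondVar_shift (μ : Config n q → ℝ) (hμ0 : ∀ σ, 0 ≤ μ σ)
    (Sfree : Finset (Fin n)) (f : Config n q → ℝ) (c : ℝ) :
    avgCondVar μ Sfree (fun σ => f σ - c) = avgCondVar μ Sfree f := by
  unfold avgCondVar
  refine Finset.sum_congr rfl fun σ _ => ?_
  by_cases hσ : μ σ = 0
  · rw [hσ, zero_mul, zero_mul]
  · have hZ := restrict_mass_pos μ hμ0 Sfreeᶜ hσ
    have hs : ∑ y, restrictDist μ Sfreeᶜ σ y = 1 := by
      rw [restrictDist_sum]; rw [if_neg (ne_of_gt hZ)]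
    rw [varD_shift hs]

end AuxPi


section AuxConsist

variable {n q : ℕ}

lemma restrict_condDist {G : SimpleGraph (Fin n)} (S : SpinSystem n q G)
    (hpos : PosCondMass S) (Λ' Λ : Finset (Fin n)) (hsub : Λ' ⊆ Λ)
    (τ x : Config n q) (hx : condDist S Λ τ x ≠ 0) :
    restrictDist (condDist S Λ τ) Λ'ᶜ x = condDist S Λ' x := by
  have hZ : 0 < ∑ σ', condWeight S Λ τ σ' := hpos Λ τ
  have hZ' : 0 < ∑ σ', condWeight S Λ' x σ' := hpos Λ' x
  have hwx : condWeight S Λ τ x ≠ 0 := by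
    intro h; exact hx (by unfold condDist; rw [h, zero_div])
  have hind : ∀ v, v ∉ Λ → x v = τ v := by
    by_contra hc
    exact hwx (condWeight_eq_zero' S hc)
  set c : ℝ := (∏ v ∈ Λ \ Λ', S.b v (x v)) *
      ∏ p ∈ ((edgePairs G).filter (fun p => p.1 ∈ Λ ∨ p.2 ∈ Λ)) \
            ((edgePairs G).filter (fun p => p.1 ∈ Λ' ∨ p.2 ∈ Λ')),
        S.A p.1 p.2 (x p.1) (x p.2) with hc_def
  have hsubF : ((edgePairs G).filter (fun p => p.1 ∈ Λ' ∨ p.2 ∈ Λ')) ⊆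
      ((edgePairs G).filter (fun p => p.1 ∈ Λ ∨ p.2 ∈ Λ)) := by
    intro p hp
    rw [Finset.mem_filter] at hp ⊢
    exact ⟨hp.1, hp.2.imp (fun h => hsub h) (fun h => hsub h)⟩
  have hfac : ∀ y : Config n q, (∀ v, v ∉ Λ' → y v = x v) →
      condWeight S Λ τ y = c * condWeight S Λ' x y := by
    intro y hy
    unfold condWeight
    rw [if_pos hy, if_pos (fun v hv => (hy v (fun h => hv (hsub h))).trans
      (hind v hv))]
    have hb : ∏ v ∈ Λ, S.b v (y v)
        = (∏ v ∈ Λ \ Λ', S.b v (x v)) * ∏ v ∈ Λ', S.b v (y v) := by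
      rw [← Finset.prod_sdiff hsub]
      congr 1
      refine Finset.prod_congr rfl fun v hv => ?_
      rw [hy v (Finset.mem_sdiff.1 hv).2]
    have hA : ∏ p ∈ (edgePairs G).filter (fun p => p.1 ∈ Λ ∨ p.2 ∈ Λ),
          S.A p.1 p.2 (y p.1) (y p.2)
        = (∏ p ∈ ((edgePairs G).filter (fun p => p.1 ∈ Λ ∨ p.2 ∈ Λ)) \
              ((edgePairs G).filter (fun p => p.1 ∈ Λ' ∨ p.2 ∈ Λ')),
            S.A p.1 p.2 (x p.1) (x p.2)) *
          ∏ p ∈ (edgePairs G).filter (fun p => p.1 ∈ Λ' ∨ p.2 ∈ Λ'),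
            S.A p.1 p.2 (y p.1) (y p.2) := by
      rw [← Finset.prod_sdiff hsubF]
      congr 1
      refine Finset.prod_congr rfl fun p hp => ?_
      have hp2 := (Finset.mem_sdiff.1 hp).2
      have hpe := (Finset.mem_filter.1 (Finset.mem_sdiff.1 hp).1).1
      have : ¬ (p.1 ∈ Λ' ∨ p.2 ∈ Λ') := fun h =>
        hp2 (Finset.mem_filter.2 ⟨hpe, h⟩)
      push_neg at this
      rw [hy p.1 this.1, hy p.2 this.2]
    rw [hb, hA, hc_def]
    ring
  have hc : c ≠ 0 := by
    have h1 := hfac x (fun v _ => rfl)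
    intro h0
    rw [h0, zero_mul] at h1
    exact hwx h1
  funext y
  unfold restrictDist
  have hnum : ∀ z : Config n q, (if ∀ v ∈ Λ'ᶜ, z v = x v then condDist S Λ τ z else 0)
      = c * condWeight S Λ' x z / (∑ σ', condWeight S Λ τ σ') := by
    intro z
    by_cases hcy : ∀ v ∈ Λ'ᶜ, z v = x v
    · rw [if_pos hcy]
      unfold condDist
      rw [hfac z (fun v hv => hcy v (Finset.mem_compl.2 hv))]
    · rw [if_neg hcy]
      have : condWeight S Λ' x z = 0 := by
        refine condWeight_eq_zero' S fun hall => hcy ?_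
        intro v hv; exact hall v (Finset.mem_compl.1 hv)
      rw [this, mul_zero, zero_div]
  have hden : ∑ σ' ∈ Finset.univ.filter
        (fun σ' : Config n q => ∀ v ∈ Λ'ᶜ, σ' v = x v), condDist S Λ τ σ'
      = c * (∑ σ', condWeight S Λ' x σ') / (∑ σ', condWeight S Λ τ σ') := by
    rw [Finset.sum_filter, Finset.sum_congr rfl fun σ' _ => hnum σ']
    rw [← Finset.sum_div, ← Finset.mul_sum]
  rw [hnum y, hden, div_div_div_comm, div_self (ne_of_gt hZ), div_one,
    mul_div_mul_left _ _ hc]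
  rfl

end AuxConsist


section AuxGap

variable {n q k : ℕ}

lemma sum_mul_piOp (μ : Config n q → ℝ) (hμ0 : ∀ σ, 0 ≤ μ σ)
    (T : Finset (Fin n)) (h : Config n q → ℝ) :
    ∑ σ, μ σ * piOp μ T h σ = ∑ σ, μ σ * h σ := by
  unfold piOp expVal
  have key : ∀ σ : Config n q, μ σ * ∑ y, restrictDist μ T σ y * h y
      = ∑ y, (μ σ * restrictDist μ T σ y) * h y := by
    intro σ; rw [Finset.mul_sum]; exact Finset.sum_congr rfl fun y _ => by ring
  rw [Finset.sum_congr rfl fun σ _ => key σ, Finset.sum_comm]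
  refine Finset.sum_congr rfl fun y _ => ?_
  rw [← Finset.sum_mul, restrict_tower μ hμ0 T y]

lemma ipW_cs (μ : Config n q → ℝ) (hμ0 : ∀ σ, 0 ≤ μ σ) (u v : Config n q → ℝ) :
    (∑ σ, μ σ * (u σ * v σ)) ^ 2
      ≤ (∑ σ, μ σ * (u σ * u σ)) * (∑ σ, μ σ * (v σ * v σ)) := by
  have h := Finset.sum_mul_sq_le_sq_mul_sq Finset.univ
    (fun σ => Real.sqrt (μ σ) * u σ) (fun σ => Real.sqrt (μ σ) * v σ)
  have e1 : ∀ σ : Config n q,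
      (Real.sqrt (μ σ) * u σ) * (Real.sqrt (μ σ) * v σ) = μ σ * (u σ * v σ) := by
    intro σ
    have : Real.sqrt (μ σ) * Real.sqrt (μ σ) = μ σ := Real.mul_self_sqrt (hμ0 σ)
    calc (Real.sqrt (μ σ) * u σ) * (Real.sqrt (μ σ) * v σ)
        = (Real.sqrt (μ σ) * Real.sqrt (μ σ)) * (u σ * v σ) := by ring
      _ = μ σ * (u σ * v σ) := by rw [this]
  have e2 : ∀ σ : Config n q,
      (Real.sqrt (μ σ) * u σ) ^ 2 = μ σ * (u σ * u σ) := by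
    intro σ
    have : Real.sqrt (μ σ) * Real.sqrt (μ σ) = μ σ := Real.mul_self_sqrt (hμ0 σ)
    calc (Real.sqrt (μ σ) * u σ) ^ 2
        = (Real.sqrt (μ σ) * Real.sqrt (μ σ)) * (u σ * u σ) := by ring
      _ = μ σ * (u σ * u σ) := by rw [this]
  have e3 : ∀ σ : Config n q,
      (Real.sqrt (μ σ) * v σ) ^ 2 = μ σ * (v σ * v σ) := by
    intro σ
    have : Real.sqrt (μ σ) * Real.sqrt (μ σ) = μ σ := Real.mul_self_sqrt (hμ0 σ)
    calc (Real.sqrt (μ σ) * v σ) ^ 2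
        = (Real.sqrt (μ σ) * Real.sqrt (μ σ)) * (v σ * v σ) := by ring
      _ = μ σ * (v σ * v σ) := by rw [this]
  rw [Finset.sum_congr rfl fun σ _ => e1 σ, Finset.sum_congr rfl fun σ _ => e2 σ,
    Finset.sum_congr rfl fun σ _ => e3 σ] at h
  exact h

/-- The averaged resampling operator. -/
noncomputable def qOp (J : Finset (Fin k)) (ν : Fin k → Config n q → Config n q → ℝ)
    (g : Config n q → ℝ) : Config n q → ℝ :=
  fun σ => (J.card : ℝ)⁻¹ * ∑ j ∈ J, expVal (ν j σ) g

lemma qOp_linear (J : Finset (Fin k)) (ν : Fin k → Config n q → Config n q → ℝ)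
    (u v : Config n q → ℝ) (t : ℝ) (σ : Config n q) :
    qOp J ν (fun σ' => u σ' + t * v σ') σ = qOp J ν u σ + t * qOp J ν v σ := by
  unfold qOp expVal
  have key : ∀ j, (∑ y, ν j σ y * (u y + t * v y))
      = (∑ y, ν j σ y * u y) + t * ∑ y, ν j σ y * v y := by
    intro j
    rw [Finset.mul_sum]
    rw [← Finset.sum_add_distrib]
    exact Finset.sum_congr rfl fun y _ => by ring
  rw [Finset.sum_congr rfl fun j _ => key j, Finset.sum_add_distrib, ← Finset.mul_sum]
  ring

end AuxGap


section AuxGap2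

variable {n q k : ℕ}

lemma hamW_update_split (ρ : Fin n → ℕ) {x y : Config n q} {v₁ : Fin n}
    (h : x v₁ ≠ y v₁) :
    hamW ρ x y = (ρ v₁ : ℝ) + hamW ρ (Function.update x v₁ (y v₁)) y := by
  unfold hamW
  have hz : Finset.univ.filter (fun v => Function.update x v₁ (y v₁) v ≠ y v)
      = (Finset.univ.filter (fun v => x v ≠ y v)).erase v₁ := by
    ext v
    simp only [Finset.mem_filter, Finset.mem_univ, true_and, Finset.mem_erase]
    by_cases hv : v = v₁
    · subst hv
      simp [Function.update_self]
    · simp [Function.update_of_ne hv, hv]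
  have hv₁mem : v₁ ∈ Finset.univ.filter (fun v => x v ≠ y v) :=
    Finset.mem_filter.2 ⟨Finset.mem_univ _, h⟩
  rw [hz, ← Finset.add_sum_erase _ _ hv₁mem]

lemma ipW_qOp (μ : Config n q → ℝ) (J : Finset (Fin k)) (T : Fin k → Finset (Fin n))
    (ν : Fin k → Config n q → Config n q → ℝ)
    (hconsist : ∀ j ∈ J, ∀ σ : Config n q, μ σ ≠ 0 → restrictDist μ (T j) σ = ν j σ)
    (u v : Config n q → ℝ) :
    ∑ σ, μ σ * (u σ * qOp J ν v σ)
      = (J.card : ℝ)⁻¹ * ∑ j ∈ J, ∑ σ, μ σ * (u σ * piOp μ (T j) v σ) := by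
  have key : ∀ σ, μ σ * (u σ * qOp J ν v σ)
      = (J.card : ℝ)⁻¹ * ∑ j ∈ J, μ σ * (u σ * piOp μ (T j) v σ) := by
    intro σ
    by_cases hσ : μ σ = 0
    · rw [hσ]; simp
    · have hq : qOp J ν v σ = (J.card : ℝ)⁻¹ * ∑ j ∈ J, piOp μ (T j) v σ := by
        unfold qOp
        congr 1
        refine Finset.sum_congr rfl fun j hj => ?_
        rw [← hconsist j hj σ hσ]; rfl
      have expand : ∑ j ∈ J, μ σ * (u σ * piOp μ (T j) v σ)
          = μ σ * u σ * ∑ j ∈ J, piOp μ (T j) v σ := by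
        rw [Finset.mul_sum]
        exact Finset.sum_congr rfl fun j _ => by ring
      rw [hq, expand]
      ring
  rw [Finset.sum_congr rfl fun σ _ => key σ, ← Finset.mul_sum, Finset.sum_comm]

lemma ipW_qOp_selfadj (μ : Config n q → ℝ) (J : Finset (Fin k))
    (T : Fin k → Finset (Fin n)) (ν : Fin k → Config n q → Config n q → ℝ)
    (hconsist : ∀ j ∈ J, ∀ σ : Config n q, μ σ ≠ 0 → restrictDist μ (T j) σ = ν j σ)
    (u v : Config n q → ℝ) :
    ∑ σ, μ σ * (u σ * qOp J ν v σ) = ∑ σ, μ σ * (qOp J ν u σ * v σ) := by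
  rw [ipW_qOp μ J T ν hconsist u v]
  have : ∑ σ, μ σ * (qOp J ν u σ * v σ) = ∑ σ, μ σ * (v σ * qOp J ν u σ) :=
    Finset.sum_congr rfl fun σ _ => by ring
  rw [this, ipW_qOp μ J T ν hconsist v u]
  congr 1
  refine Finset.sum_congr rfl fun j _ => ?_
  rw [piOp_selfadj μ (T j) u v]
  exact Finset.sum_congr rfl fun σ _ => by ring

lemma qOp_psd (μ : Config n q → ℝ) (hμ0 : ∀ σ, 0 ≤ μ σ) (J : Finset (Fin k))
    (T : Fin k → Finset (Fin n)) (ν : Fin k → Config n q → Config n q → ℝ)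
    (hconsist : ∀ j ∈ J, ∀ σ : Config n q, μ σ ≠ 0 → restrictDist μ (T j) σ = ν j σ)
    (v : Config n q → ℝ) :
    0 ≤ ∑ σ, μ σ * (v σ * qOp J ν v σ) := by
  rw [ipW_qOp μ J T ν hconsist v v]
  refine mul_nonneg (by positivity) (Finset.sum_nonneg fun j _ => ?_)
  exact piOp_psd μ hμ0 (T j) v

end AuxGap2


section MainGap

variable {n q k : ℕ}

set_option maxHeartbeats 1000000 in
lemma gap_abstract
    (μ : Config n q → ℝ) (hμ0 : ∀ σ, 0 ≤ μ σ) (hμ1 : ∑ σ, μ σ = 1)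
    (A : Config n q → Prop) (hA : ∀ σ, μ σ ≠ 0 → A σ)
    (hAconv : ∀ (x y : Config n q) (v : Fin n), A x → A y →
      A (Function.update x v (y v)))
    (J : Finset (Fin k)) (hJ : 0 < J.card)
    (T : Fin k → Finset (Fin n))
    (ν : Fin k → Config n q → Config n q → ℝ)
    (hconsist : ∀ j ∈ J, ∀ σ : Config n q, μ σ ≠ 0 →
      restrictDist μ (T j) σ = ν j σ)
    (ρ : Fin n → ℕ) (hρ : ∀ v, 0 < ρ v)
    (hflip : ∀ (g : Config n q → ℝ) (L : ℝ), 0 ≤ L →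
      (∀ x y : Config n q, A x → A y → |g x - g y| ≤ L * hamW ρ x y) →
      ∀ (x y : Config n q) (v₀ : Fin n), A x → A y → x v₀ ≠ y v₀ →
        (∀ v, v ≠ v₀ → x v = y v) →
        (∑ j ∈ J, |expVal (ν j x) g - expVal (ν j y) g|)
          ≤ (J.card : ℝ) / 2 * (L * (ρ v₀ : ℝ)))
    (f : Config n q → ℝ) :
    varD μ f ≤ 2 / (J.card : ℝ) * ∑ j ∈ J, avgCondVar μ (T j)ᶜ f := by
  have hc : (0 : ℝ) < (J.card : ℝ) := by exact_mod_cast hJ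
  set c : ℝ := (J.card : ℝ) with hcdef
  set fb : Config n q → ℝ := fun σ => f σ - expVal μ f with hfbdef
  set D : ℝ := ∑ v : Fin n, (ρ v : ℝ) with hDdef
  have hD0 : 0 ≤ D := Finset.sum_nonneg fun v _ => by positivity
  set L0 : ℝ := 2 * ∑ σ : Config n q, |fb σ| with hL0def
  have hL00 : 0 ≤ L0 := by
    refine mul_nonneg (by norm_num) (Finset.sum_nonneg fun σ _ => abs_nonneg _)
  set g : ℕ → Config n q → ℝ := fun t => (qOp J ν)^[t] fb with hgdef
  have hg0 : g 0 = fb := rfl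
  have hg : ∀ t, g (t + 1) = qOp J ν (g t) := fun t =>
    Function.iterate_succ_apply' (qOp J ν) t fb
  set a : ℕ → ℝ := fun t => ∑ σ, μ σ * (g 0 σ * g t σ) with hadef
  -- telescoping contraction
  have tele : ∀ (gg : Config n q → ℝ) (L : ℝ), 0 ≤ L →
      (∀ x y : Config n q, A x → A y → |gg x - gg y| ≤ L * hamW ρ x y) →
      ∀ (d : ℕ) (x y : Config n q), A x → A y →
        (Finset.univ.filter (fun v => x v ≠ y v)).card ≤ d →
        (∑ j ∈ J, |expVal (ν j x) gg - expVal (ν j y) gg|)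
          ≤ c / 2 * (L * hamW ρ x y) := by
    intro gg L hL hLipg d
    induction d with
    | zero =>
      intro x y hx hy hcard
      have hxy : x = y := by
        funext v
        by_contra hv
        have : v ∈ Finset.univ.filter (fun v => x v ≠ y v) :=
          Finset.mem_filter.2 ⟨Finset.mem_univ _, hv⟩
        have := Finset.card_pos.2 ⟨v, this⟩
        omega
      subst hxy
      rw [hamW_self']
      simp
    | succ d ih =>
      intro x y hx hy hcard
      by_cases hxy : x = y
      · subst hxy
        rw [hamW_self']
        simp
      · obtain ⟨v₁, hv₁⟩ : ∃ v, x v ≠ y v := by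
          by_contra hcn; push_neg at hcn; exact hxy (funext hcn)
        set z := Function.update x v₁ (y v₁) with hzdef
        have hz : A z := hAconv x y v₁ hx hy
        have hxz1 : x v₁ ≠ z v₁ := by
          rw [hzdef]; rw [Function.update_self]; exact hv₁
        have hxz2 : ∀ v, v ≠ v₁ → x v = z v := by
          intro v hv; rw [hzdef, Function.update_of_ne hv]
        have hflip1 := hflip gg L hL hLipg x z v₁ hx hz hxz1 hxz2
        have hcard2 : (Finset.univ.filter (fun v => z v ≠ y v)).card ≤ d := by
          have hzf : Finset.univ.filter (fun v => z v ≠ y v)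
              = (Finset.univ.filter (fun v => x v ≠ y v)).erase v₁ := by
            ext v
            simp only [Finset.mem_filter, Finset.mem_univ, true_and,
              Finset.mem_erase]
            by_cases hv : v = v₁
            · subst hv; simp [hzdef, Function.update_self]
            · simp [hzdef, Function.update_of_ne hv, hv]
          have hv₁mem : v₁ ∈ Finset.univ.filter (fun v => x v ≠ y v) :=
            Finset.mem_filter.2 ⟨Finset.mem_univ _, hv₁⟩
          rw [hzf, Finset.card_erase_of_mem hv₁mem]
          omega
        have ih2 := ih z y hz hy hcard2
        calc ∑ j ∈ J, |expVal (ν j x) gg - expVal (ν j y) gg|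
            ≤ ∑ j ∈ J, (|expVal (ν j x) gg - expVal (ν j z) gg|
                + |expVal (ν j z) gg - expVal (ν j y) gg|) :=
              Finset.sum_le_sum fun j _ => abs_sub_le _ _ _
          _ = (∑ j ∈ J, |expVal (ν j x) gg - expVal (ν j z) gg|)
                + ∑ j ∈ J, |expVal (ν j z) gg - expVal (ν j y) gg| :=
              Finset.sum_add_distrib
          _ ≤ c / 2 * (L * (ρ v₁ : ℝ)) + c / 2 * (L * hamW ρ z y) :=
              add_le_add hflip1 ih2
          _ = c / 2 * (L * hamW ρ x y) := by
              rw [hamW_update_split ρ hv₁]; ring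
  -- one-step contraction of the Lipschitz constant
  have hcontr : ∀ (gg : Config n q → ℝ) (L : ℝ), 0 ≤ L →
      (∀ x y : Config n q, A x → A y → |gg x - gg y| ≤ L * hamW ρ x y) →
      ∀ x y : Config n q, A x → A y →
        |qOp J ν gg x - qOp J ν gg y| ≤ (1 / 2 * L) * hamW ρ x y := by
    intro gg L hL hLipg x y hx hy
    have htele := tele gg L hL hLipg
      ((Finset.univ.filter (fun v => x v ≠ y v)).card) x y hx hy le_rfl
    have habs : |qOp J ν gg x - qOp J ν gg y|
        ≤ c⁻¹ * ∑ j ∈ J, |expVal (ν j x) gg - expVal (ν j y) gg| := by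
      unfold qOp
      rw [← mul_sub, abs_mul, ← Finset.sum_sub_distrib]
      rw [abs_of_nonneg (by positivity : (0:ℝ) ≤ (J.card : ℝ)⁻¹)]
      refine mul_le_mul_of_nonneg_left ?_ (by positivity)
      exact Finset.abs_sum_le_sum_abs _ _
    calc |qOp J ν gg x - qOp J ν gg y|
        ≤ c⁻¹ * ∑ j ∈ J, |expVal (ν j x) gg - expVal (ν j y) gg| := habs
      _ ≤ c⁻¹ * (c / 2 * (L * hamW ρ x y)) := by
          refine mul_le_mul_of_nonneg_left htele (by positivity)
      _ = (1 / 2 * L) * hamW ρ x y := by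
          field_simp
  -- Lipschitz bounds along the iteration
  have hLip : ∀ t, ∀ x y : Config n q, A x → A y →
      |g t x - g t y| ≤ ((1 / 2 : ℝ) ^ t * L0) * hamW ρ x y := by
    intro t
    induction t with
    | zero =>
      intro x y hx hy
      by_cases hxy : x = y
      · subst hxy; rw [hamW_self', mul_zero, sub_self, abs_zero]
      · have h1 : |g 0 x - g 0 y| ≤ L0 := by
          rw [hg0, hfbdef]
          calc |(f x - expVal μ f) - (f y - expVal μ f)|
              ≤ |f x - expVal μ f| + |f y - expVal μ f| := abs_sub _ _
            _ ≤ (∑ σ : Config n q, |fb σ|) + ∑ σ : Config n q, |fb σ| := by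
                refine add_le_add ?_ ?_ <;>
                · refine Finset.single_le_sum (f := fun σ => |fb σ|)
                    (fun σ _ => abs_nonneg _) (Finset.mem_univ _)
            _ = L0 := by rw [hL0def]; ring
        calc |g 0 x - g 0 y| ≤ L0 := h1
          _ = ((1 / 2 : ℝ) ^ 0 * L0) * 1 := by norm_num
          _ ≤ ((1 / 2 : ℝ) ^ 0 * L0) * hamW ρ x y := by
              refine mul_le_mul_of_nonneg_left (one_le_hamW' hρ hxy) ?_
              norm_num
              exact hL00
    | succ t ih =>
      intro x y hx hy
      rw [hg t]
      have := hcontr (g t) ((1 / 2 : ℝ) ^ t * L0) (by positivity) ih x y hx hy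
      calc |qOp J ν (g t) x - qOp J ν (g t) y|
          ≤ (1 / 2 * ((1 / 2 : ℝ) ^ t * L0)) * hamW ρ x y := this
        _ = ((1 / 2 : ℝ) ^ (t + 1) * L0) * hamW ρ x y := by ring
  -- mean zero along the iteration
  have hmean : ∀ t, (∑ σ, μ σ * g t σ) = 0 := by
    intro t
    induction t with
    | zero =>
      rw [hg0, hfbdef]
      have : ∀ σ : Config n q, μ σ * (f σ - expVal μ f)
          = μ σ * f σ - expVal μ f * μ σ := fun σ => by ring
      rw [Finset.sum_congr rfl fun σ _ => this σ, Finset.sum_sub_distrib,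
        ← Finset.mul_sum, hμ1, mul_one]
      unfold expVal
      ring
    | succ t ih =>
      rw [hg t]
      have e1 : ∑ σ, μ σ * qOp J ν (g t) σ
          = ∑ σ, μ σ * ((fun _ => (1:ℝ)) σ * qOp J ν (g t) σ) :=
        Finset.sum_congr rfl fun σ _ => by ring
      rw [e1, ipW_qOp μ J T ν hconsist (fun _ => (1:ℝ)) (g t)]
      have e2 : ∀ j ∈ J, (∑ σ, μ σ * ((fun _ => (1:ℝ)) σ * piOp μ (T j) (g t) σ))
          = 0 := by
        intro j _
        have : ∑ σ, μ σ * ((fun _ => (1:ℝ)) σ * piOp μ (T j) (g t) σ)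
            = ∑ σ, μ σ * piOp μ (T j) (g t) σ :=
          Finset.sum_congr rfl fun σ _ => by ring
        rw [this, sum_mul_piOp μ hμ0 (T j) (g t)]
        exact ih
      rw [Finset.sum_congr rfl e2, Finset.sum_const_zero, mul_zero]
  -- sup bound from mean zero and Lipschitz
  have hsup : ∀ (h : Config n q → ℝ) (L : ℝ), 0 ≤ L →
      (∀ x y : Config n q, A x → A y → |h x - h y| ≤ L * hamW ρ x y) →
      (∑ σ, μ σ * h σ) = 0 → ∀ x, A x → |h x| ≤ L * D := by
    intro h L hL hLiph hmh x hx
    have hrep : h x = ∑ y, μ y * (h x - h y) := by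
      have : ∀ y : Config n q, μ y * (h x - h y) = μ y * h x - μ y * h y :=
        fun y => by ring
      rw [Finset.sum_congr rfl fun y _ => this y, Finset.sum_sub_distrib,
        ← Finset.sum_mul, hμ1, hmh]
      ring
    rw [hrep]
    calc |∑ y, μ y * (h x - h y)| ≤ ∑ y, |μ y * (h x - h y)| :=
        Finset.abs_sum_le_sum_abs _ _
      _ ≤ ∑ y : Config n q, μ y * (L * D) := by
          refine Finset.sum_le_sum fun y _ => ?_
          rw [abs_mul, abs_of_nonneg (hμ0 y)]
          by_cases hy : μ y = 0
          · rw [hy, zero_mul, zero_mul]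
          · refine mul_le_mul_of_nonneg_left ?_ (hμ0 y)
            calc |h x - h y| ≤ L * hamW ρ x y := hLiph x y hx (hA y hy)
              _ ≤ L * D := by
                  refine mul_le_mul_of_nonneg_left ?_ hL
                  rw [hDdef]
                  exact hamW_le_total' ρ x y
      _ = L * D := by rw [← Finset.sum_mul, hμ1, one_mul]
  -- decay of the correlation sequence
  set C : ℝ := L0 * D * ∑ σ, μ σ * |fb σ| with hCdef
  have hC0 : 0 ≤ C := by
    refine mul_nonneg (mul_nonneg hL00 hD0) (Finset.sum_nonneg fun σ _ => ?_)
    exact mul_nonneg (hμ0 σ) (abs_nonneg _)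
  have hdecay : ∀ t, a t ≤ (1 / 2 : ℝ) ^ t * C := by
    intro t
    have key : ∀ σ, μ σ * (g 0 σ * g t σ)
        ≤ μ σ * |fb σ| * ((1 / 2 : ℝ) ^ t * L0 * D) := by
      intro σ
      by_cases hσ : μ σ = 0
      · rw [hσ, zero_mul, zero_mul, zero_mul]
      · have hAσ := hA σ hσ
        have hb := hsup (g t) ((1 / 2 : ℝ) ^ t * L0) (by positivity)
          (hLip t) (hmean t) σ hAσ
        have h1 : |g 0 σ * g t σ| ≤ |fb σ| * ((1 / 2 : ℝ) ^ t * L0 * D) := by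
          rw [hg0, abs_mul]
          exact mul_le_mul_of_nonneg_left hb (abs_nonneg _)
        have h2 : g 0 σ * g t σ ≤ |fb σ| * ((1 / 2 : ℝ) ^ t * L0 * D) :=
          le_trans (le_abs_self _) h1
        calc μ σ * (g 0 σ * g t σ)
            ≤ μ σ * (|fb σ| * ((1 / 2 : ℝ) ^ t * L0 * D)) :=
              mul_le_mul_of_nonneg_left h2 (hμ0 σ)
          _ = μ σ * |fb σ| * ((1 / 2 : ℝ) ^ t * L0 * D) := by ring
    calc a t ≤ ∑ σ, μ σ * |fb σ| * ((1 / 2 : ℝ) ^ t * L0 * D) :=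
        Finset.sum_le_sum fun σ _ => key σ
      _ = (1 / 2 : ℝ) ^ t * C := by
          rw [← Finset.sum_mul]
          show (∑ σ, μ σ * |fb σ|) * ((1 / 2 : ℝ) ^ t * L0 * D)
              = (1 / 2 : ℝ) ^ t * (L0 * D * ∑ σ, μ σ * |fb σ|)
          ring
  -- the two-variable correlation identity
  have hab : ∀ s t, (∑ σ, μ σ * (g s σ * g t σ)) = a (s + t) := by
    intro s
    induction s with
    | zero => intro t; rw [Nat.zero_add]
    | succ s ih =>
      intro t
      have e1 : ∑ σ, μ σ * (g (s + 1) σ * g t σ)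
          = ∑ σ, μ σ * (g t σ * qOp J ν (g s) σ) := by
        refine Finset.sum_congr rfl fun σ _ => ?_
        rw [hg s]; ring
      have e2 : ∑ σ, μ σ * (g t σ * qOp J ν (g s) σ)
          = ∑ σ, μ σ * (qOp J ν (g t) σ * g s σ) :=
        ipW_qOp_selfadj μ J T ν hconsist (g t) (g s)
      have e3 : ∑ σ, μ σ * (qOp J ν (g t) σ * g s σ)
          = ∑ σ, μ σ * (g s σ * g (t + 1) σ) := by
        refine Finset.sum_congr rfl fun σ _ => ?_
        rw [hg t]; ring
      rw [e1, e2, e3, ih (t + 1)]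
      exact congrArg a (by omega)
  -- nonnegativity of the sequence
  have hapos : ∀ t, 0 ≤ a t := by
    intro t
    rcases Nat.even_or_odd t with ⟨s, hs⟩ | ⟨s, hs⟩
    · have : a t = ∑ σ, μ σ * (g s σ * g s σ) := by
        rw [hab s s]; exact congrArg a (by omega)
      rw [this]
      exact Finset.sum_nonneg fun σ _ => mul_nonneg (hμ0 σ) (mul_self_nonneg _)
    · have : a t = ∑ σ, μ σ * (g s σ * g (s + 1) σ) := by
        rw [hab s (s + 1)]; exact congrArg a (by omega)
      rw [this]
      have : ∑ σ, μ σ * (g s σ * g (s + 1) σ)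
          = ∑ σ, μ σ * (g s σ * qOp J ν (g s) σ) := by
        refine Finset.sum_congr rfl fun σ _ => ?_
        rw [hg s]
      rw [this]
      exact qOp_psd μ hμ0 J T ν hconsist (g s)
  -- the B-form Cauchy-Schwarz
  have hBCS : ∀ u v : Config n q → ℝ,
      (∑ σ, μ σ * (u σ * qOp J ν v σ)) ^ 2
        ≤ (∑ σ, μ σ * (u σ * qOp J ν u σ)) * ∑ σ, μ σ * (v σ * qOp J ν v σ) := by
    intro u v
    have hBsymm : ∑ σ, μ σ * (v σ * qOp J ν u σ)
        = ∑ σ, μ σ * (u σ * qOp J ν v σ) := by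
      rw [ipW_qOp_selfadj μ J T ν hconsist v u]
      exact Finset.sum_congr rfl fun σ _ => by ring
    have hquad : ∀ t : ℝ, 0 ≤ (∑ σ, μ σ * (v σ * qOp J ν v σ)) * (t * t)
        + (2 * ∑ σ, μ σ * (u σ * qOp J ν v σ)) * t
        + ∑ σ, μ σ * (u σ * qOp J ν u σ) := by
      intro t
      have hpsd := qOp_psd μ hμ0 J T ν hconsist (fun σ => u σ + t * v σ)
      have hexp : ∑ σ, μ σ * ((u σ + t * v σ) * qOp J ν (fun σ' => u σ' + t * v σ') σ)
          = (∑ σ, μ σ * (v σ * qOp J ν v σ)) * (t * t)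
            + ((∑ σ, μ σ * (u σ * qOp J ν v σ))
              + ∑ σ, μ σ * (v σ * qOp J ν u σ)) * t
            + ∑ σ, μ σ * (u σ * qOp J ν u σ) := by
        have e1 : ∀ σ, μ σ * ((u σ + t * v σ) * qOp J ν (fun σ' => u σ' + t * v σ') σ)
            = μ σ * (v σ * qOp J ν v σ) * (t * t)
              + (μ σ * (u σ * qOp J ν v σ) + μ σ * (v σ * qOp J ν u σ)) * t
              + μ σ * (u σ * qOp J ν u σ) := by
          intro σ
          rw [qOp_linear J ν u v t σ]
          ring
        rw [Finset.sum_congr rfl fun σ _ => e1 σ]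
        rw [Finset.sum_add_distrib, Finset.sum_add_distrib, ← Finset.sum_mul,
          ← Finset.sum_mul, Finset.sum_add_distrib]
      rw [hexp, hBsymm] at hpsd
      nlinarith [hpsd]
    have hdis := discrim_le_zero hquad
    unfold discrim at hdis
    nlinarith [hdis]
  -- log-convexity
  have hlog : ∀ t, a (t + 1) ^ 2 ≤ a t * a (t + 2) := by
    intro t
    rcases Nat.even_or_odd t with ⟨s, hs⟩ | ⟨s, hs⟩
    · have e1 : a (t + 1) = ∑ σ, μ σ * (g s σ * g (s + 1) σ) := by
        rw [hab s (s + 1)]; exact congrArg a (by omega)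
      have e2 : a t = ∑ σ, μ σ * (g s σ * g s σ) := by
        rw [hab s s]; exact congrArg a (by omega)
      have e3 : a (t + 2) = ∑ σ, μ σ * (g (s + 1) σ * g (s + 1) σ) := by
        rw [hab (s + 1) (s + 1)]; exact congrArg a (by omega)
      rw [e1, e2, e3]
      exact ipW_cs μ hμ0 (g s) (g (s + 1))
    · have e1 : a (t + 1) = ∑ σ, μ σ * (g s σ * qOp J ν (g (s + 1)) σ) := by
        have : ∑ σ, μ σ * (g s σ * qOp J ν (g (s + 1)) σ)
            = ∑ σ, μ σ * (g s σ * g (s + 2) σ) := by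
          refine Finset.sum_congr rfl fun σ _ => ?_
          rw [hg (s + 1)]
        rw [this, hab s (s + 2)]; exact congrArg a (by omega)
      have e2 : a t = ∑ σ, μ σ * (g s σ * qOp J ν (g s) σ) := by
        have : ∑ σ, μ σ * (g s σ * qOp J ν (g s) σ)
            = ∑ σ, μ σ * (g s σ * g (s + 1) σ) := by
          refine Finset.sum_congr rfl fun σ _ => ?_
          rw [hg s]
        rw [this, hab s (s + 1)]; exact congrArg a (by omega)
      have e3 : a (t + 2) = ∑ σ, μ σ * (g (s + 1) σ * qOp J ν (g (s + 1)) σ) := by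
        have : ∑ σ, μ σ * (g (s + 1) σ * qOp J ν (g (s + 1)) σ)
            = ∑ σ, μ σ * (g (s + 1) σ * g (s + 2) σ) := by
          refine Finset.sum_congr rfl fun σ _ => ?_
          rw [hg (s + 1)]
        rw [this, hab (s + 1) (s + 2)]; exact congrArg a (by omega)
      rw [e1, e2, e3]
      exact hBCS (g s) (g (s + 1))
  -- conclude a 1 ≤ a 0 / 2
  have hhalf : a 1 ≤ a 0 / 2 := by
    by_contra hcon
    push_neg at hcon
    have ha00 : 0 ≤ a 0 := hapos 0
    have ha1pos : 0 < a 1 := lt_of_le_of_lt (by linarith) hcon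
    have ha0pos : 0 < a 0 := by
      rcases lt_or_eq_of_le ha00 with h | h
      · exact h
      · exfalso
        have h1 := hlog 0
        rw [← h] at h1
        nlinarith [hapos 2]
    have hposall : ∀ t, 0 < a t ∧ 0 < a (t + 1) := by
      intro t
      induction t with
      | zero => exact ⟨ha0pos, ha1pos⟩
      | succ t ih =>
        refine ⟨ih.2, ?_⟩
        have h1 := hlog t
        nlinarith [ih.1, ih.2]
    have hratio : ∀ t, a 1 * a t ≤ a 0 * a (t + 1) := by
      intro t
      induction t with
      | zero => linarith [mul_comm (a 1) (a 0)]
      | succ t ih =>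
        have h1 := hlog t
        have h2 := (hposall t).1
        have h3 := (hposall t).2
        have h4 := (hposall (t + 1)).2
        have key : a 1 * a (t + 1) * a t ≤ a 0 * a (t + 2) * a t := by
          nlinarith
        exact le_of_mul_le_mul_right key h2
    have hgrow : ∀ t, a 1 ^ t * a 0 ≤ a 0 ^ t * a t := by
      intro t
      induction t with
      | zero => simp
      | succ t ih =>
        have h2 := (hposall t).1
        calc a 1 ^ (t + 1) * a 0 = a 1 * (a 1 ^ t * a 0) := by ring
          _ ≤ a 1 * (a 0 ^ t * a t) := by
              refine mul_le_mul_of_nonneg_left ih (le_of_lt ha1pos)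
          _ = a 0 ^ t * (a 1 * a t) := by ring
          _ ≤ a 0 ^ t * (a 0 * a (t + 1)) := by
              refine mul_le_mul_of_nonneg_left (hratio t) ?_
              positivity
          _ = a 0 ^ (t + 1) * a (t + 1) := by ring
    set x : ℝ := 2 * a 1 / a 0 with hxdef
    have hx1 : 1 < x := by
      rw [hxdef]
      rw [lt_div_iff₀ ha0pos]
      linarith
    obtain ⟨t, ht⟩ := pow_unbounded_of_one_lt (C / a 0) hx1
    have hkey : x ^ t ≤ C / a 0 := by
      have h1 : a 1 ^ t * a 0 ≤ a 0 ^ t * ((1 / 2 : ℝ) ^ t * C) := by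
        calc a 1 ^ t * a 0 ≤ a 0 ^ t * a t := hgrow t
          _ ≤ a 0 ^ t * ((1 / 2 : ℝ) ^ t * C) := by
              refine mul_le_mul_of_nonneg_left (hdecay t) ?_
              positivity
      have h2 : (2 : ℝ) ^ t * (a 1 ^ t * a 0) ≤ (2 : ℝ) ^ t
          * (a 0 ^ t * ((1 / 2 : ℝ) ^ t * C)) := by
        refine mul_le_mul_of_nonneg_left h1 (by positivity)
      have h3 : (2 : ℝ) ^ t * ((1 / 2 : ℝ) ^ t) = 1 := by
        rw [← mul_pow]
        norm_num
      rw [hxdef, div_pow, mul_pow]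
      rw [div_le_div_iff₀ (by positivity) ha0pos]
      calc (2:ℝ) ^ t * a 1 ^ t * a 0 = (2:ℝ) ^ t * (a 1 ^ t * a 0) := by ring
        _ ≤ (2 : ℝ) ^ t * (a 0 ^ t * ((1 / 2 : ℝ) ^ t * C)) := h2
        _ = ((2 : ℝ) ^ t * ((1 / 2 : ℝ) ^ t)) * (a 0 ^ t * C) := by ring
        _ = C * a 0 ^ t := by rw [h3]; ring
    linarith
  -- assembly
  have hvar : varD μ f = a 0 := by
    show varD μ f = ∑ σ, μ σ * (g 0 σ * g 0 σ)
    unfold varD expVal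
    refine Finset.sum_congr rfl fun σ _ => ?_
    rw [hg0]
    simp only [hfbdef]
    unfold expVal
    ring
  have havg : ∀ j ∈ J, avgCondVar μ (T j)ᶜ f
      = a 0 - ∑ σ, μ σ * (g 0 σ * piOp μ (T j) (g 0) σ) := by
    intro j _
    have h1 : avgCondVar μ (T j)ᶜ f = avgCondVar μ (T j)ᶜ fb := by
      rw [hfbdef]
      exact (avgCondVar_shift μ hμ0 ((T j)ᶜ) f (expVal μ f)).symm
    rw [h1, avgCondVar_eq μ hμ0 (T j) fb]
    congr 1
  have hsum : ∑ j ∈ J, avgCondVar μ (T j)ᶜ f = c * a 0 - c * a 1 := by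
    rw [Finset.sum_congr rfl havg, Finset.sum_sub_distrib, Finset.sum_const,
      nsmul_eq_mul]
    have h1 : a 1 = ∑ σ, μ σ * (g 0 σ * qOp J ν (g 0) σ) := by
      rw [hadef]
      refine Finset.sum_congr rfl fun σ _ => ?_
      rw [hg 0]
    have h2 : ∑ j ∈ J, ∑ σ, μ σ * (g 0 σ * piOp μ (T j) (g 0) σ) = c * a 1 := by
      rw [h1, ipW_qOp μ J T ν hconsist (g 0) (g 0)]
      rw [← mul_assoc, mul_inv_cancel₀ (ne_of_gt hc), one_mul]
    rw [h2, hcdef]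
  rw [hvar, hsum]
  have : 2 / c * (c * a 0 - c * a 1) = 2 * a 0 - 2 * a 1 := by
    field_simp
  rw [hcdef] at this ⊢
  rw [this]
  linarith

end MainGap


section AuxCoupling

variable {n q : ℕ}

lemma coupling_expVal_diff (μ₁ μ₂ : Config n q → ℝ)
    (π : Config n q → Config n q → ℝ) (hcpl : IsCoupling μ₁ μ₂ π)
    (g : Config n q → ℝ) (L : ℝ) (hL : 0 ≤ L) (ρ : Fin n → ℕ)
    (A : Config n q → Prop)
    (hs1 : ∀ x, μ₁ x ≠ 0 → A x) (hs2 : ∀ y, μ₂ y ≠ 0 → A y)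
    (hLip : ∀ x y, A x → A y → |g x - g y| ≤ L * hamW ρ x y) :
    |expVal μ₁ g - expVal μ₂ g| ≤ L * expHam π ρ := by
  have hsupp : ∀ x y, π x y ≠ 0 → A x ∧ A y := by
    intro x y hxy
    have hpos : 0 < π x y := lt_of_le_of_ne (hcpl.nonneg x y) (Ne.symm hxy)
    constructor
    · refine hs1 x (ne_of_gt ?_)
      rw [← hcpl.fst_marginal x]
      exact lt_of_lt_of_le hpos (Finset.single_le_sum
        (fun y' _ => hcpl.nonneg x y') (Finset.mem_univ y))
    · refine hs2 y (ne_of_gt ?_)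
      rw [← hcpl.snd_marginal y]
      exact lt_of_lt_of_le hpos (Finset.single_le_sum
        (fun x' _ => hcpl.nonneg x' y) (Finset.mem_univ x))
  have h1 : expVal μ₁ g = ∑ x, ∑ y, π x y * g x := by
    unfold expVal
    refine Finset.sum_congr rfl fun x _ => ?_
    rw [← hcpl.fst_marginal x, Finset.sum_mul]
  have h2 : expVal μ₂ g = ∑ x, ∑ y, π x y * g y := by
    unfold expVal
    rw [Finset.sum_comm]
    refine Finset.sum_congr rfl fun y _ => ?_
    rw [← hcpl.snd_marginal y, Finset.sum_mul]
  rw [h1, h2, ← Finset.sum_sub_distrib]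
  have h3 : ∀ x : Config n q, (∑ y, π x y * g x) - (∑ y, π x y * g y)
      = ∑ y, π x y * (g x - g y) := by
    intro x
    rw [← Finset.sum_sub_distrib]
    exact Finset.sum_congr rfl fun y _ => by ring
  rw [Finset.sum_congr rfl fun x _ => h3 x]
  calc |∑ x, ∑ y, π x y * (g x - g y)| ≤ ∑ x, |∑ y, π x y * (g x - g y)| :=
      Finset.abs_sum_le_sum_abs _ _
    _ ≤ ∑ x, ∑ y, |π x y * (g x - g y)| :=
      Finset.sum_le_sum fun x _ => Finset.abs_sum_le_sum_abs _ _
    _ ≤ ∑ x, ∑ y, L * (π x y * hamW ρ x y) := by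
      refine Finset.sum_le_sum fun x _ => Finset.sum_le_sum fun y _ => ?_
      by_cases hxy : π x y = 0
      · rw [hxy, zero_mul, abs_zero, zero_mul, mul_zero]
      · obtain ⟨hAx, hAy⟩ := hsupp x y hxy
        rw [abs_mul, abs_of_nonneg (hcpl.nonneg x y)]
        calc π x y * |g x - g y| ≤ π x y * (L * hamW ρ x y) :=
            mul_le_mul_of_nonneg_left (hLip x y hAx hAy) (hcpl.nonneg x y)
          _ = L * (π x y * hamW ρ x y) := by ring
    _ = L * expHam π ρ := by
      unfold expHam
      rw [Finset.mul_sum]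
      refine Finset.sum_congr rfl fun x _ => ?_
      rw [Finset.mul_sum]

end AuxCoupling

/-- Lemma 5.2: path coupling for the `(k−r) ↔ 1` down-up
walk.  If `μ` is `M`-coupling independent with witnessing weight `ρ`,
`0 ≤ r ≤ k−2M`, `|R| = r` and `τ` is any pinning on `U_R`, then (a) the
`(k−r) ↔ 1` down-up walk on `μ^τ` has relaxation time at most `2`, and (b)
for any two configurations on `V∖U_R` differing at exactly one vertex `v₀`
there is a one-step coupling (same uniformly random `j ∈ [k]∖R`, then coupled
resampling outside `U_{R∪{j}}`) whose expected weighted Hamming distance is at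
most `(M/(k−r))·ρ(v₀) ≤ (1/2)·ρ(v₀)`. -/
theorem statement5 {n q : ℕ} (G : SimpleGraph (Fin n)) (S : SpinSystem n q G)
    (hq : 2 ≤ q) (hpos : PosCondMass S)
    (M k : ℕ) (hM : 1 ≤ M) (ρ : Fin n → ℕ) (hCI : CoupIndepWith S ρ (M : ℝ))
    (U : Fin k → Finset (Fin n)) (hU : IsPartition U)
    (r : ℕ) (hr : r + 2 * M ≤ k) (R : Finset (Fin k)) (hR : R.card = r)
    (τ : Config n q) :
    (∀ f : Config n q → ℝ,
      varD (condDist S (unionBlocks U R)ᶜ τ) f ≤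
        2 / ((k : ℝ) - (r : ℝ)) *
          ∑ j ∈ (univ : Finset (Fin k)) \ R,
            avgCondVar (condDist S (unionBlocks U R)ᶜ τ)
              (unionBlocks U (insert j R))ᶜ f)
    ∧
    (∀ (X Y : Config n q) (v₀ : Fin n), v₀ ∉ unionBlocks U R →
      X v₀ ≠ Y v₀ → (∀ v, v ≠ v₀ → X v = Y v) →
      ∃ π : Fin k → (Config n q → Config n q → ℝ),
        (∀ j ∈ (univ : Finset (Fin k)) \ R,
          IsCoupling
            (condDist S (unionBlocks U (insert j R))ᶜ
              (fun v => if v ∈ unionBlocks U R then τ v else X v))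
            (condDist S (unionBlocks U (insert j R))ᶜ
              (fun v => if v ∈ unionBlocks U R then τ v else Y v))
            (π j)) ∧
        (1 / ((k : ℝ) - (r : ℝ))) *
            ∑ j ∈ (univ : Finset (Fin k)) \ R, expHam (π j) ρ ≤
          (M : ℝ) / ((k : ℝ) - (r : ℝ)) * (ρ v₀ : ℝ) ∧
        (M : ℝ) / ((k : ℝ) - (r : ℝ)) * (ρ v₀ : ℝ) ≤ (1 / 2) * (ρ v₀ : ℝ)) := by
  classical
  obtain ⟨hρ, hCI2⟩ := hCI
  have hμ0 : ∀ σ, 0 ≤ condDist S (unionBlocks U R)ᶜ τ σ :=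
    fun σ => condDist_nonneg' S _ τ σ
  have hμ1 : ∑ σ, condDist S (unionBlocks U R)ᶜ τ σ = 1 :=
    condDist_sum_one' S hpos _ τ
  have hrk : r ≤ k := by omega
  have hcard : ((Finset.univ : Finset (Fin k)) \ R).card = k - r := by
    rw [Finset.card_sdiff_of_subset (Finset.subset_univ R), Finset.card_univ,
      Fintype.card_fin, hR]
  have hkrpos : 0 < k - r := by omega
  have hcast : (((Finset.univ : Finset (Fin k)) \ R).card : ℝ) = (k : ℝ) - (r : ℝ) := by
    rw [hcard, Nat.cast_sub hrk]
  have hcpos : (0 : ℝ) < (k : ℝ) - (r : ℝ) := by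
    rw [← hcast, hcard]
    exact_mod_cast hkrpos
  have hsubUR : ∀ j : Fin k, unionBlocks U R ⊆ unionBlocks U (insert j R) := by
    intro j v hv
    rw [unionBlocks, Finset.mem_biUnion] at hv ⊢
    obtain ⟨i, hi, hvi⟩ := hv
    exact ⟨i, Finset.mem_insert_of_mem hi, hvi⟩
  have hmemT : ∀ (j : Fin k) (v : Fin n), v ∈ unionBlocks U (insert j R) ↔
      v ∈ U j ∨ v ∈ unionBlocks U R := by
    intro j v
    rw [unionBlocks, Finset.mem_biUnion]
    constructor
    · rintro ⟨i, hi, hvi⟩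
      rcases Finset.mem_insert.1 hi with h | h
      · exact Or.inl (h ▸ hvi)
      · exact Or.inr (Finset.mem_biUnion.2 ⟨i, h, hvi⟩)
    · rintro (h | h)
      · exact ⟨j, Finset.mem_insert_self j R, h⟩
      · obtain ⟨i, hi, hvi⟩ := Finset.mem_biUnion.1 h
        exact ⟨i, Finset.mem_insert_of_mem hi, hvi⟩
  constructor
  · -- part (a)
    intro f
    have hA : ∀ σ, condDist S (unionBlocks U R)ᶜ τ σ ≠ 0 →
        (∀ v ∈ unionBlocks U R, σ v = τ v) := by
      intro σ hσ v hv
      exact condDist_support' S hσ v (fun hc => (Finset.mem_compl.1 hc) hv)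
    have hAconv : ∀ (x y : Config n q) (v : Fin n),
        (∀ w ∈ unionBlocks U R, x w = τ w) → (∀ w ∈ unionBlocks U R, y w = τ w) →
        (∀ w ∈ unionBlocks U R, Function.update x v (y v) w = τ w) := by
      intro x y v hx hy w hw
      by_cases hwv : w = v
      · subst hwv
        rw [Function.update_self]
        exact hy w hw
      · rw [Function.update_of_ne hwv]
        exact hx w hw
    have hconsist : ∀ j ∈ (Finset.univ : Finset (Fin k)) \ R,
        ∀ σ : Config n q, condDist S (unionBlocks U R)ᶜ τ σ ≠ 0 →
        restrictDist (condDist S (unionBlocks U R)ᶜ τ) (unionBlocks U (insert j R)) σ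
          = condDist S (unionBlocks U (insert j R))ᶜ σ := by
      intro j _ σ hσ
      have h := restrict_condDist S hpos ((unionBlocks U (insert j R))ᶜ)
        ((unionBlocks U R)ᶜ) (Finset.compl_subset_compl.2 (hsubUR j)) τ σ hσ
      rwa [compl_compl] at h
    have hflip : ∀ (g : Config n q → ℝ) (L : ℝ), 0 ≤ L →
        (∀ x y : Config n q, (∀ v ∈ unionBlocks U R, x v = τ v) →
          (∀ v ∈ unionBlocks U R, y v = τ v) → |g x - g y| ≤ L * hamW ρ x y) →
        ∀ (x y : Config n q) (v₀ : Fin n),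
          (∀ v ∈ unionBlocks U R, x v = τ v) →
          (∀ v ∈ unionBlocks U R, y v = τ v) → x v₀ ≠ y v₀ →
          (∀ v, v ≠ v₀ → x v = y v) →
          (∑ j ∈ (Finset.univ : Finset (Fin k)) \ R,
            |expVal (condDist S (unionBlocks U (insert j R))ᶜ x) g
              - expVal (condDist S (unionBlocks U (insert j R))ᶜ y) g|)
            ≤ (((Finset.univ : Finset (Fin k)) \ R).card : ℝ) / 2
              * (L * (ρ v₀ : ℝ)) := by
      intro g L hL hLip x y v₀ hx hy hne hagree
      obtain ⟨j₀, hj₀⟩ := hU.2 v₀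
      have hv₀R : v₀ ∉ unionBlocks U R := by
        intro hc
        exact hne ((hx v₀ hc).trans (hy v₀ hc).symm)
      have hj₀R : j₀ ∉ R := by
        intro hc
        exact hv₀R (Finset.mem_biUnion.2 ⟨j₀, hc, hj₀⟩)
      have hj₀mem : j₀ ∈ (Finset.univ : Finset (Fin k)) \ R :=
        Finset.mem_sdiff.2 ⟨Finset.mem_univ _, hj₀R⟩
      have hzero : ∀ j ∈ (Finset.univ : Finset (Fin k)) \ R, j ≠ j₀ →
          |expVal (condDist S (unionBlocks U (insert j R))ᶜ x) g
            - expVal (condDist S (unionBlocks U (insert j R))ᶜ y) g| = 0 := by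
        intro j _ hjne
        have hv₀Uj : v₀ ∉ U j := by
          intro hc
          exact (Finset.disjoint_left.1 (hU.1 j j₀ hjne) hc) hj₀
        have hv₀Tj : v₀ ∉ unionBlocks U (insert j R) := by
          intro hc
          rcases (hmemT j v₀).1 hc with h | h
          · exact hv₀Uj h
          · exact hv₀R h
        have heq : condDist S (unionBlocks U (insert j R))ᶜ x
            = condDist S (unionBlocks U (insert j R))ᶜ y := by
          refine condDist_congr' S ?_
          intro v hv
          have hvT : v ∈ unionBlocks U (insert j R) := by
            by_contra hvc
            exact hv (Finset.mem_compl.2 hvc)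
          exact hagree v (fun hh => hv₀Tj (hh ▸ hvT))
        rw [heq, sub_self, abs_zero]
      rw [Finset.sum_eq_single_of_mem j₀ hj₀mem hzero]
      have hv₀T : v₀ ∈ unionBlocks U (insert j₀ R) := (hmemT j₀ v₀).2 (Or.inl hj₀)
      obtain ⟨π, hπ, hexpH⟩ := hCI2 (unionBlocks U (insert j₀ R)) v₀ x y hv₀T hne
        (fun v _ hvne => hagree v hvne)
      have hs1 : ∀ x', condDist S (unionBlocks U (insert j₀ R))ᶜ x x' ≠ 0 →
          (∀ v ∈ unionBlocks U R, x' v = τ v) := by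
        intro x' hx' v hv
        have h := condDist_support' S hx' v
          (fun hc => (Finset.mem_compl.1 hc) (hsubUR j₀ hv))
        rw [h]
        exact hx v hv
      have hs2 : ∀ y', condDist S (unionBlocks U (insert j₀ R))ᶜ y y' ≠ 0 →
          (∀ v ∈ unionBlocks U R, y' v = τ v) := by
        intro y' hy' v hv
        have h := condDist_support' S hy' v
          (fun hc => (Finset.mem_compl.1 hc) (hsubUR j₀ hv))
        rw [h]
        exact hy v hv
      have hdiff := coupling_expVal_diff _ _ π hπ g L hL ρ
        (fun σ => ∀ v ∈ unionBlocks U R, σ v = τ v) hs1 hs2 hLip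
      have hM2 : (M : ℝ) ≤ (((Finset.univ : Finset (Fin k)) \ R).card : ℝ) / 2 := by
        rw [hcast]
        have h2 : (r : ℝ) + 2 * (M : ℝ) ≤ (k : ℝ) := by exact_mod_cast hr
        linarith
      calc |expVal (condDist S (unionBlocks U (insert j₀ R))ᶜ x) g
            - expVal (condDist S (unionBlocks U (insert j₀ R))ᶜ y) g|
          ≤ L * expHam π ρ := hdiff
        _ ≤ L * ((M : ℝ) * (ρ v₀ : ℝ)) := mul_le_mul_of_nonneg_left hexpH hL
        _ = (M : ℝ) * (L * (ρ v₀ : ℝ)) := by ring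
        _ ≤ (((Finset.univ : Finset (Fin k)) \ R).card : ℝ) / 2
              * (L * (ρ v₀ : ℝ)) := by
            refine mul_le_mul_of_nonneg_right hM2 ?_
            exact mul_nonneg hL (by positivity)
    have key := gap_abstract (condDist S (unionBlocks U R)ᶜ τ) hμ0 hμ1
      (fun σ => ∀ v ∈ unionBlocks U R, σ v = τ v) hA hAconv
      ((Finset.univ : Finset (Fin k)) \ R) (by rw [hcard]; exact hkrpos)
      (fun j => unionBlocks U (insert j R))
      (fun j σ => condDist S (unionBlocks U (insert j R))ᶜ σ)
      hconsist ρ hρ hflip f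
    rwa [hcast] at key
  · -- part (b)
    intro X Y v₀ hv₀R hne hagree
    set σX : Config n q := fun v => if v ∈ unionBlocks U R then τ v else X v with hσX
    set σY : Config n q := fun v => if v ∈ unionBlocks U R then τ v else Y v with hσY
    have hne' : σX v₀ ≠ σY v₀ := by
      show (if v₀ ∈ unionBlocks U R then τ v₀ else X v₀)
          ≠ (if v₀ ∈ unionBlocks U R then τ v₀ else Y v₀)
      rw [if_neg hv₀R, if_neg hv₀R]
      exact hne
    have hagg : ∀ v, v ≠ v₀ → σX v = σY v := by
      intro v hv
      show (if v ∈ unionBlocks U R then τ v else X v)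
          = (if v ∈ unionBlocks U R then τ v else Y v)
      by_cases h : v ∈ unionBlocks U R
      · rw [if_pos h, if_pos h]
      · rw [if_neg h, if_neg h]
        exact hagree v hv
    obtain ⟨j₀, hj₀⟩ := hU.2 v₀
    have hj₀R : j₀ ∉ R := by
      intro hc
      exact hv₀R (Finset.mem_biUnion.2 ⟨j₀, hc, hj₀⟩)
    have hj₀mem : j₀ ∈ (Finset.univ : Finset (Fin k)) \ R :=
      Finset.mem_sdiff.2 ⟨Finset.mem_univ _, hj₀R⟩
    set πf : Fin k → (Config n q → Config n q → ℝ) := fun j =>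
      if h : v₀ ∈ unionBlocks U (insert j R) then
        Classical.choose (hCI2 (unionBlocks U (insert j R)) v₀ σX σY h hne'
          (fun v _ hv => hagg v hv))
      else (fun x y => if x = y then
        condDist S (unionBlocks U (insert j R))ᶜ σX x else 0) with hπf
    refine ⟨πf, ?_, ?_, ?_⟩
    · intro j _
      show IsCoupling (condDist S (unionBlocks U (insert j R))ᶜ σX)
        (condDist S (unionBlocks U (insert j R))ᶜ σY) (πf j)
      by_cases h : v₀ ∈ unionBlocks U (insert j R)
      · have : πf j = Classical.choose (hCI2 (unionBlocks U (insert j R)) v₀ σX σY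
            h hne' (fun v _ hv => hagg v hv)) := by
          rw [hπf]
          exact dif_pos h
        rw [this]
        exact (Classical.choose_spec (hCI2 (unionBlocks U (insert j R)) v₀ σX σY
          h hne' (fun v _ hv => hagg v hv))).1
      · have hcd : condDist S (unionBlocks U (insert j R))ᶜ σX
            = condDist S (unionBlocks U (insert j R))ᶜ σY := by
          refine condDist_congr' S ?_
          intro v hv
          have hvT : v ∈ unionBlocks U (insert j R) := by
            by_contra hvc
            exact hv (Finset.mem_compl.2 hvc)
          exact hagg v (fun hh => h (hh ▸ hvT))
        have hdiag : πf j = (fun x y => if x = y then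
            condDist S (unionBlocks U (insert j R))ᶜ σX x else 0) := by
          rw [hπf]
          exact dif_neg h
        rw [hdiag]
        refine ⟨?_, ?_, ?_⟩
        · intro x y
          split
          · exact condDist_nonneg' S _ _ _
          · exact le_rfl
        · intro x
          rw [Finset.sum_ite_eq]
          exact if_pos (Finset.mem_univ x)
        · intro y
          rw [Finset.sum_ite_eq']
          rw [if_pos (Finset.mem_univ y)]
          rw [hcd]
    · -- expected Hamming distance bound
      have hzero : ∀ j ∈ (Finset.univ : Finset (Fin k)) \ R, j ≠ j₀ →
          expHam (πf j) ρ = 0 := by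
        intro j _ hjne
        have hv₀Uj : v₀ ∉ U j := by
          intro hc
          exact (Finset.disjoint_left.1 (hU.1 j j₀ hjne) hc) hj₀
        have hv₀Tj : v₀ ∉ unionBlocks U (insert j R) := by
          intro hc
          rcases (hmemT j v₀).1 hc with h | h
          · exact hv₀Uj h
          · exact hv₀R h
        have hdiag : πf j = (fun x y => if x = y then
            condDist S (unionBlocks U (insert j R))ᶜ σX x else 0) := by
          rw [hπf]
          exact dif_neg hv₀Tj
        rw [hdiag]
        unfold expHam
        refine Finset.sum_eq_zero fun x _ => Finset.sum_eq_zero fun y _ => ?_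
        show (if x = y then condDist S (unionBlocks U (insert j R))ᶜ σX x else 0)
            * hamW ρ x y = 0
        by_cases hxy : x = y
        · subst hxy
          rw [hamW_self', mul_zero]
        · rw [if_neg hxy, zero_mul]
      have hv₀T : v₀ ∈ unionBlocks U (insert j₀ R) := (hmemT j₀ v₀).2 (Or.inl hj₀)
      have hbound : expHam (πf j₀) ρ ≤ (M : ℝ) * (ρ v₀ : ℝ) := by
        have hch : πf j₀ = Classical.choose (hCI2 (unionBlocks U (insert j₀ R)) v₀
            σX σY hv₀T hne' (fun v _ hv => hagg v hv)) := by
          rw [hπf]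
          exact dif_pos hv₀T
        rw [hch]
        exact (Classical.choose_spec (hCI2 (unionBlocks U (insert j₀ R)) v₀ σX σY
          hv₀T hne' (fun v _ hv => hagg v hv))).2
      have hsum : ∑ j ∈ (Finset.univ : Finset (Fin k)) \ R, expHam (πf j) ρ
          = expHam (πf j₀) ρ := Finset.sum_eq_single_of_mem j₀ hj₀mem hzero
      calc (1 / ((k : ℝ) - (r : ℝ))) *
            ∑ j ∈ (Finset.univ : Finset (Fin k)) \ R, expHam (πf j) ρ
          ≤ (1 / ((k : ℝ) - (r : ℝ))) * ((M : ℝ) * (ρ v₀ : ℝ)) := by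
            refine mul_le_mul_of_nonneg_left ?_ (by positivity)
            rw [hsum]
            exact hbound
        _ = (M : ℝ) / ((k : ℝ) - (r : ℝ)) * (ρ v₀ : ℝ) := by ring
    · -- final comparison
      have h2 : (r : ℝ) + 2 * (M : ℝ) ≤ (k : ℝ) := by exact_mod_cast hr
      have hM2 : (M : ℝ) / ((k : ℝ) - (r : ℝ)) ≤ 1 / 2 := by
        rw [div_le_div_iff₀ hcpos (by norm_num : (0:ℝ) < 2)]
        linarith
      refine mul_le_mul_of_nonneg_right hM2 ?_
      positivity


end Paper
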